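/- In an irreducible n-partite orthogonal product basis S = {|a_{j,1}⟩⊗...⊗|a_{j,n}⟩ : j = 0,...,d₁⋯dₙ−1} of ℂ^{d₁}⊗...⊗ℂ^{dₙ}, any nonzero vector |α⟩ ∈ ℂ^{d₁} is orthogonal (counting multiplicity) to at most d₁d₂⋯dₙ − d₂⋯dₙ − 1 of the first-factor vectors |a_{0,1}⟩,...,|a_{d₁⋯dₙ−1,1}⟩. -/

import Mathlib

open scoped ComplexInnerProductSpace Matrix
noncomputable section
/-- The state space of an `n`-partite system with local dimensions `d i`,
modelling `ℂ^{d 0} ⊗ ... ⊗ ℂ^{d (n-1)}`. -/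
abbrev GState {n : ℕ} (d : Fin n → ℕ) := EuclideanSpace ℂ (∀ i, Fin (d i))
/-- The product state `v 0 ⊗ v 1 ⊗ ... ⊗ v (n-1)`. -/
def prodState {n : ℕ} (d : Fin n → ℕ) (v : ∀ i, EuclideanSpace ℂ (Fin (d i))) : GState d :=
  WithLp.toLp 2 fun (x : ∀ i, Fin (d i)) => ∏ i, v i (x i)
/-- A family of product states (given by their local factors `a j`) is reducible at
party `p` if the states split into two nonempty groups whose `p`-th factors are
mutually orthogonal. -/
def ReducibleAt {n : ℕ} {d : Fin n → ℕ} {J : Type}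
    (a : J → ∀ i, EuclideanSpace ℂ (Fin (d i))) (p : Fin n) : Prop :=
  ∃ T : Set J, T.Nonempty ∧ Tᶜ.Nonempty ∧ ∀ j ∈ T, ∀ k ∈ Tᶜ, ⟪a j p, a k p⟫ = 0

lemma inner_prodState {n : ℕ} (d : Fin n → ℕ) (u v : ∀ i, EuclideanSpace ℂ (Fin (d i))) :
    ⟪prodState d u, prodState d v⟫ = ∏ i, ⟪u i, v i⟫ := by
  simp only [PiLp.inner_apply, RCLike.inner_apply, prodState, map_prod, ← Finset.prod_mul_distrib]
  exact (Fintype.prod_sum fun i t => v i t * (starRingEnd ℂ) (u i t)).symm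

lemma prodState_ne_zero {n : ℕ} (d : Fin n → ℕ) (v : ∀ i, EuclideanSpace ℂ (Fin (d i)))
    (h : ∀ i, v i ≠ 0) : prodState d v ≠ 0 := by
  rw [← inner_self_ne_zero (𝕜 := ℂ), inner_prodState]
  exact Finset.prod_ne_zero_iff.2 fun i _ => inner_self_ne_zero.2 (h i)

lemma aux_bound
    {n : ℕ} {d : Fin (n + 1) → ℕ} {J : Type} [Fintype J]
    (hcard : Fintype.card J = ∏ i, d i)
    (a : J → ∀ i, EuclideanSpace ℂ (Fin (d i)))
    (hnz : ∀ j i, a j i ≠ 0)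
    (horth : ∀ j k, j ≠ k → ⟪prodState d (a j), prodState d (a k)⟫ = 0)
    (hirr : ¬ ReducibleAt a 0)
    (α : EuclideanSpace ℂ (Fin (d 0))) (hα : α ≠ 0) :
    Nat.card {k : J // ⟪α, a k 0⟫ = 0}
      ≤ (∏ i, d i) - (∏ i : Fin n, d i.succ) - 1 := by
  classical
  obtain ⟨D, hDdef⟩ : ∃ D : ℕ, D = ∏ i, d i := ⟨_, rfl⟩
  obtain ⟨D', hD'def⟩ : ∃ D' : ℕ, D' = ∏ i : Fin n, d i.succ := ⟨_, rfl⟩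
  rw [← hDdef] at hcard
  rw [← hDdef, ← hD'def]
  have hD : D = d 0 * D' := by rw [hDdef, hD'def]; exact Fin.prod_univ_succ d
  -- trivial case `D' = 0` (then `D = 0`, `J` empty)
  rcases Nat.eq_zero_or_pos D' with hD'0 | hD'pos
  · have hD0 : D = 0 := by rw [hD, hD'0, mul_zero]
    haveI hJ : IsEmpty J := Fintype.card_eq_zero_iff.1 (by omega)
    haveI : IsEmpty {k : J // ⟪α, a k 0⟫ = 0} := ⟨fun k => hJ.false k.1⟩
    rw [Nat.card_of_isEmpty]
    exact Nat.zero_le _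
  -- `d 0 ≠ 0` since `α ≠ 0`
  have hd0 : 0 < d 0 := by
    rcases Nat.eq_zero_or_pos (d 0) with h0 | h0
    · exact absurd (PiLp.ext fun x => absurd x.isLt (by omega) : α = 0) hα
    · exact h0
  rw [Nat.card_eq_fintype_card]
  -- the normalized vector α̂
  have hnα : (‖α‖ : ℂ) ≠ 0 := by
    simpa using (norm_ne_zero_iff.2 hα)
  obtain ⟨αh, hαh⟩ : ∃ αh : EuclideanSpace ℂ (Fin (d 0)), αh = (‖α‖ : ℂ)⁻¹ • α := ⟨_, rfl⟩
  have hαhself : ⟪αh, αh⟫ = 1 := by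
    rw [hαh, inner_smul_left, inner_smul_right, inner_self_eq_norm_sq_to_K]
    rw [map_inv₀, Complex.conj_ofReal]
    field_simp
    rfl
  have hαhorth : ∀ k : J, ⟪α, a k 0⟫ = 0 → ⟪a k 0, αh⟫ = 0 := by
    intro k hk
    rw [hαh, inner_smul_right, ← inner_conj_symm, hk]
    simp
  -- the auxiliary orthonormal family
  set X := ∀ i : Fin n, Fin (d i.succ) with hXdef
  set S := {k : J // ⟪α, a k 0⟫ = 0} with hSdef
  obtain ⟨u, hu⟩ : ∃ u : X → GState d, u = fun x =>
      prodState d (Fin.cons αh fun i => EuclideanSpace.single (x i) 1) := ⟨_, rfl⟩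
  obtain ⟨b, hb⟩ : ∃ b : S → GState d, b = fun j =>
      (‖prodState d (a j.1)‖ : ℂ)⁻¹ • prodState d (a j.1) := ⟨_, rfl⟩
  obtain ⟨F, hF⟩ : ∃ F : S ⊕ X → GState d, F = Sum.elim b u := ⟨_, rfl⟩
  have hpnz : ∀ j : J, prodState d (a j) ≠ 0 :=
    fun j => prodState_ne_zero d (a j) (hnz j)
  have hpnorm : ∀ j : J, (‖prodState d (a j)‖ : ℂ) ≠ 0 := by
    intro j; simpa using norm_ne_zero_iff.2 (hpnz j)
  have hbu : ∀ (j : S) (x : X), ⟪b j, u x⟫ = 0 := by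
    intro j x
    simp only [hb, hu]
    rw [inner_smul_left]
    have h0 : ⟪prodState d (a j.1),
        prodState d (Fin.cons αh fun i => EuclideanSpace.single (x i) 1)⟫ = 0 := by
      rw [inner_prodState, Fin.prod_univ_succ]
      simp only [Fin.cons_zero]
      rw [hαhorth j.1 j.2]
      simp
    rw [h0, mul_zero]
  have huu : ∀ x y : X, ⟪u x, u y⟫ = if x = y then 1 else 0 := by
    intro x y
    simp only [hu]
    rw [inner_prodState, Fin.prod_univ_succ]
    simp only [Fin.cons_zero, Fin.cons_succ]
    rw [hαhself, one_mul]
    have hsing : ∀ i : Fin n,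
        ⟪(EuclideanSpace.single (x i) 1 : EuclideanSpace ℂ (Fin (d i.succ))),
          EuclideanSpace.single (y i) 1⟫ = if x i = y i then 1 else 0 := by
      intro i
      rw [EuclideanSpace.inner_single_left, EuclideanSpace.single_apply]
      simp [eq_comm]
    simp only [hsing]
    by_cases hxy : x = y
    · subst hxy; simp
    · rw [if_neg hxy]
      obtain ⟨i, hi⟩ := Function.ne_iff.1 hxy
      exact Finset.prod_eq_zero (Finset.mem_univ i) (if_neg hi)
  have hbb : ∀ j j' : S, ⟪b j, b j'⟫ = if j = j' then 1 else 0 := by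
    intro j j'
    simp only [hb]
    rw [inner_smul_left, inner_smul_right, map_inv₀, Complex.conj_ofReal]
    by_cases hjj : j = j'
    · subst hjj
      rw [if_pos rfl, inner_self_eq_norm_sq_to_K]
      field_simp
      exact div_self (pow_ne_zero 2 (hpnorm j))
    · rw [if_neg hjj, horth j.1 j'.1 (fun h => hjj (Subtype.ext h))]
      ring
  have hOrth : Orthonormal ℂ F := by
    rw [orthonormal_iff_ite]
    rintro (j | x) (j' | x')
    · simpa [hF] using hbb j j'
    · simpa [hF] using hbu j x'
    · have h0 : ⟪u x, b j'⟫ = 0 := by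
        rw [← inner_conj_symm, hbu j' x]; simp
      simpa [hF] using h0
    · simpa [hF] using huu x x'
  have hfr : Module.finrank ℂ (GState d) = D := by
    rw [finrank_euclideanSpace, hDdef]
    simp [Fintype.card_pi]
  have hcardX : Fintype.card X = D' := by
    rw [hD'def]
    simp [hXdef, Fintype.card_pi]
  have hle : Fintype.card S + D' ≤ D := by
    have h1 := hOrth.linearIndependent.fintype_card_le_finrank
    rwa [hfr, Fintype.card_sum, hcardX] at h1
  by_contra hcon
  push_neg at hcon
  replace hcon : D - D' - 1 < Fintype.card S := hcon
  have hScard : Fintype.card S = D - D' := by omega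
  have hD'D : D' < D := by omega
  haveI hSne : Nonempty S := by
    rw [← Fintype.card_pos_iff, hScard]; omega
  have hcardeq : Fintype.card (S ⊕ X) = Module.finrank ℂ (GState d) := by
    rw [Fintype.card_sum, hcardX, hScard, hfr]; omega
  obtain ⟨B, hBF⟩ : ∃ B : Module.Basis (S ⊕ X) ℂ (GState d), ⇑B = F :=
    ⟨basisOfLinearIndependentOfCardEqFinrank hOrth.linearIndependent hcardeq,
      coe_basisOfLinearIndependentOfCardEqFinrank _ _⟩
  obtain ⟨OB, hOBF⟩ : ∃ OB : OrthonormalBasis (S ⊕ X) ℂ (GState d), ∀ i, OB i = F i :=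
    ⟨B.toOrthonormalBasis (hBF ▸ hOrth), fun i =>
      (congrFun (B.coe_toOrthonormalBasis _) i).trans (congrFun hBF i)⟩
  -- the bad set
  set T : Set J := {k | ⟪α, a k 0⟫ = 0} with hT
  apply hirr
  refine ⟨T, ?_, ?_, ?_⟩
  · obtain ⟨j⟩ := hSne
    exact ⟨j.1, j.2⟩
  · -- Tᶜ nonempty
    by_contra hne
    rw [Set.not_nonempty_iff_eq_empty] at hne
    have hall : ∀ k : J, ⟪α, a k 0⟫ = 0 := by
      intro k
      by_contra hc
      have hmem : k ∈ Tᶜ := hc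
      rw [hne] at hmem
      exact hmem
    have hSfull : Fintype.card S = D :=
      (Fintype.card_congr (Equiv.subtypeUnivEquiv hall)).trans hcard
    omega
  · -- main orthogonality
    intro j hj k hk
    have hkne : ⟪α, a k 0⟫ ≠ 0 := hk
    obtain ⟨v, hv⟩ : ∃ v : GState d, v = prodState d (a k) := ⟨_, rfl⟩
    have hrepr : v = ∑ x : X, ⟪u x, v⟫ • u x := by
      have h1 := OB.sum_repr' v
      rw [Fintype.sum_sum_type] at h1
      have h2 : ∀ j' : S, ⟪OB (Sum.inl j'), v⟫ • OB (Sum.inl j') = 0 := by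
        intro j'
        rw [hOBF]
        have h3 : ⟪F (Sum.inl j'), v⟫ = 0 := by
          rw [hF]
          show ⟪b j', v⟫ = 0
          rw [hb]
          show ⟪(‖prodState d (a j'.1)‖ : ℂ)⁻¹ • prodState d (a j'.1), v⟫ = 0
          rw [inner_smul_left, hv,
            horth j'.1 k (by rintro rfl; exact hkne j'.2), mul_zero]
        rw [h3, zero_smul]
      simp only [h2, Finset.sum_const_zero, zero_add] at h1
      refine h1.symm.trans (Finset.sum_congr rfl fun x _ => ?_)
      rw [hOBF, hF]
      simp
    have hpoint : ∀ (s : Fin (d 0)) (t : X),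
        a k 0 s * ∏ i : Fin n, a k i.succ (t i)
          = αh s * ∑ x : X, ⟪u x, v⟫ * (if t = x then 1 else 0) := by
      intro s t
      obtain ⟨z, hz0, hzs⟩ : ∃ z : ∀ i : Fin (n + 1), Fin (d i),
          z 0 = s ∧ ∀ i : Fin n, z i.succ = t i :=
        ⟨Fin.cons s t, by simp, fun i => by simp⟩
      have h1 : v z = ∑ x : X, ⟪u x, v⟫ * u x z := by
        conv_lhs => rw [hrepr]
        rw [WithLp.ofLp_sum]
        exact Finset.sum_apply _ _ _
      have h2 : v z = a k 0 s * ∏ i : Fin n, a k i.succ (t i) := by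
        simp only [hv, prodState, Fin.prod_univ_succ]
        rw [hz0]
        congr 1
        exact Finset.prod_congr rfl fun i _ => by rw [hzs i]
      have h3 : ∀ x : X, u x z = αh s * (if t = x then 1 else 0) := by
        intro x
        simp only [hu, prodState, Fin.prod_univ_succ, Fin.cons_zero, Fin.cons_succ]
        rw [hz0]
        congr 1
        have h4 : ∀ i : Fin n, (EuclideanSpace.single (x i) 1 :
            EuclideanSpace ℂ (Fin (d i.succ))) (z i.succ) = if t i = x i then 1 else 0 := by
          intro i; rw [EuclideanSpace.single_apply, hzs i]
        simp only [h4]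
        by_cases htx : t = x
        · subst htx; simp
        · rw [if_neg htx]
          obtain ⟨i, hi⟩ := Function.ne_iff.1 htx
          exact Finset.prod_eq_zero (Finset.mem_univ i) (if_neg hi)
      rw [← h2, h1, Finset.mul_sum]
      refine Finset.sum_congr rfl fun x _ => ?_
      rw [h3 x]; ring
    have htail : ∃ t : X, ∏ i : Fin n, a k i.succ (t i) ≠ 0 := by
      have hco : ∀ i : Fin n, ∃ s, a k i.succ s ≠ 0 := by
        intro i
        by_contra hcc
        push_neg at hcc
        exact hnz k i.succ (PiLp.ext hcc)
      choose t ht using hco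
      exact ⟨t, Finset.prod_ne_zero_iff.2 fun i _ => ht i⟩
    obtain ⟨t0, ht0⟩ := htail
    obtain ⟨P, hP⟩ : ∃ P : ℂ, P = ∏ i : Fin n, a k i.succ (t0 i) := ⟨_, rfl⟩
    obtain ⟨c, hc⟩ : ∃ c : ℂ, c = ∑ x : X, ⟪u x, v⟫ * (if t0 = x then 1 else 0) := ⟨_, rfl⟩
    rw [← hP] at ht0
    have hak0 : a k 0 = ((‖α‖ : ℂ)⁻¹ * c / P) • α := by
      refine PiLp.ext fun s => ?_
      have h5 := hpoint s t0
      rw [← hP, ← hc] at h5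
      have hαhs : αh s = (‖α‖ : ℂ)⁻¹ * α s := by rw [hαh]; rfl
      show a k 0 s = ((‖α‖ : ℂ)⁻¹ * c / P) * α s
      rw [div_mul_eq_mul_div, eq_div_iff ht0]
      rw [hαhs] at h5
      rw [h5]; ring
    have hj' : ⟪α, a j 0⟫ = 0 := hj
    have hj0 : ⟪a j 0, α⟫ = 0 := by
      rw [← inner_conj_symm, hj']; simp
    rw [hak0, inner_smul_right, hj0, mul_zero]

/-- In an irreducible `n`-partite OPB of `ℂ^{d₁} ⊗ ... ⊗ ℂ^{dₙ}`, any
nonzero vector `α ∈ ℂ^{d₁}` is orthogonal (counting multiplicity) to at most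
`d₁d₂⋯dₙ - d₂⋯dₙ - 1` of the first-factor vectors. -/
theorem orthogonal_to_first_factors_bound
    {n : ℕ} {d : Fin (n + 1) → ℕ}
    (a : Fin (∏ i, d i) → ∀ i, EuclideanSpace ℂ (Fin (d i)))
    (hnz : ∀ j i, a j i ≠ 0)
    (horth : ∀ j k, j ≠ k → ⟪prodState d (a j), prodState d (a k)⟫ = 0)
    (hspan : Submodule.span ℂ (Set.range fun j => prodState d (a j)) = ⊤)
    (hirr : ∀ p, ¬ ReducibleAt a p)
    (α : EuclideanSpace ℂ (Fin (d 0))) (hα : α ≠ 0) :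
    Nat.card {k : Fin (∏ i, d i) // ⟪α, a k 0⟫ = 0}
      ≤ (∏ i, d i) - (∏ i : Fin n, d i.succ) - 1 :=
  aux_bound (Fintype.card_fin _) a hnz horth (hirr 0) α hα
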